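/- For every triple ψ₁, ψ₂, ψ₃ of unit vectors in a complex inner product space E, the Bures angles satisfy the triangle inequality arccos|⟨ψ₂, ψ₃⟩| ≤ arccos|⟨ψ₁, ψ₂⟩| + arccos|⟨ψ₁, ψ₃⟩|. -/

import Mathlib

open scoped InnerProductSpace
open Real

theorem arccos_antitone' : Antitone Real.arccos := fun x y h => by
  simp only [Real.arccos]
  have := Real.monotone_arcsin h
  linarith

/-- Triangle inequality for Bures angles: for unit vectors
`ψ₁, ψ₂, ψ₃`, `arccos |⟨ψ₂, ψ₃⟩| ≤ arccos |⟨ψ₁, ψ₂⟩| + arccos |⟨ψ₁, ψ₃⟩|`. -/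
theorem bures_angle_triangle
    {E : Type*} [NormedAddCommGroup E] [InnerProductSpace ℂ E]
    (ψ₁ ψ₂ ψ₃ : E) (h₁ : ‖ψ₁‖ = 1) (h₂ : ‖ψ₂‖ = 1) (h₃ : ‖ψ₃‖ = 1) :
    Real.arccos ‖⟪ψ₂, ψ₃⟫_ℂ‖
      ≤ Real.arccos ‖⟪ψ₁, ψ₂⟫_ℂ‖
        + Real.arccos ‖⟪ψ₁, ψ₃⟫_ℂ‖ := by
  set α := ⟪ψ₁, ψ₂⟫_ℂ with hα
  set β := ⟪ψ₁, ψ₃⟫_ℂ with hβ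
  set a := ‖α‖ with ha
  set b := ‖β‖ with hb
  set c := ‖⟪ψ₂, ψ₃⟫_ℂ‖ with hc
  have ha0 : (0:ℝ) ≤ a := norm_nonneg _
  have hb0 : (0:ℝ) ≤ b := norm_nonneg _
  have hc0 : (0:ℝ) ≤ c := norm_nonneg _
  have ha1 : a ≤ 1 := by
    have := norm_inner_le_norm (𝕜 := ℂ) ψ₁ ψ₂
    rw [h₁, h₂] at this; simpa using this
  have hb1 : b ≤ 1 := by
    have := norm_inner_le_norm (𝕜 := ℂ) ψ₁ ψ₃
    rw [h₁, h₃] at this; simpa using this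
  -- orthogonal decompositions
  set u := ψ₂ - α • ψ₁ with hu
  set v := ψ₃ - β • ψ₁ with hv
  have h11 : ⟪ψ₁, ψ₁⟫_ℂ = 1 := by
    rw [inner_self_eq_norm_sq_to_K, h₁]; norm_num
  have huv : ⟪u, v⟫_ℂ = ⟪ψ₂, ψ₃⟫_ℂ - (starRingEnd ℂ α) * β := by
    simp only [hu, hv, inner_sub_left, inner_sub_right, inner_smul_left, inner_smul_right, h11]
    rw [← inner_conj_symm ψ₂ ψ₁]
    ring
  have conj_mul_abs : ∀ z : ℂ, (starRingEnd ℂ z) * z = ((‖z‖ : ℝ) : ℂ)^2 := by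
    intro z
    rw [mul_comm, Complex.mul_conj, Complex.normSq_eq_norm_sq]
    push_cast; ring
  have hnu : ‖u‖ = Real.sqrt (1 - a^2) := by
    have h1 : ⟪u, u⟫_ℂ = ((1 - a^2 : ℝ) : ℂ) := by
      have : ⟪u, u⟫_ℂ = ⟪ψ₂, ψ₂⟫_ℂ - (starRingEnd ℂ α) * α := by
        simp only [hu, inner_sub_left, inner_sub_right, inner_smul_left, inner_smul_right, h11]
        rw [← inner_conj_symm ψ₂ ψ₁]
        ring
      rw [this, inner_self_eq_norm_sq_to_K, h₂, conj_mul_abs]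
      push_cast; ring
    rw [inner_self_eq_norm_sq_to_K] at h1
    have h2 : ‖u‖^2 = 1 - a^2 :=
      by simpa [← Complex.ofReal_pow] using congrArg Complex.re h1
    rw [← h2, Real.sqrt_sq (norm_nonneg u)]
  have hnv : ‖v‖ = Real.sqrt (1 - b^2) := by
    have h1 : ⟪v, v⟫_ℂ = ((1 - b^2 : ℝ) : ℂ) := by
      have : ⟪v, v⟫_ℂ = ⟪ψ₃, ψ₃⟫_ℂ - (starRingEnd ℂ β) * β := by
        simp only [hv, inner_sub_left, inner_sub_right, inner_smul_left, inner_smul_right, h11]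
        rw [← inner_conj_symm ψ₃ ψ₁]
        ring
      rw [this, inner_self_eq_norm_sq_to_K, h₃, conj_mul_abs]
      push_cast; ring
    rw [inner_self_eq_norm_sq_to_K] at h1
    have h2 : ‖v‖^2 = 1 - b^2 :=
      by simpa [← Complex.ofReal_pow] using congrArg Complex.re h1
    rw [← h2, Real.sqrt_sq (norm_nonneg v)]
  -- key inequality
  have key : a * b - Real.sqrt (1 - a^2) * Real.sqrt (1 - b^2) ≤ c := by
    have habs : ‖(starRingEnd ℂ α) * β‖ = a * b := by
      rw [norm_mul, Complex.norm_conj]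
    have h1 : ‖⟪u, v⟫_ℂ‖ ≤ Real.sqrt (1 - a^2) * Real.sqrt (1 - b^2) := by
      have := norm_inner_le_norm (𝕜 := ℂ) u v
      rw [hnu, hnv] at this
      simpa using this
    have h2 : a * b ≤ c + ‖⟪u, v⟫_ℂ‖ := by
      have : (starRingEnd ℂ α) * β = ⟪ψ₂, ψ₃⟫_ℂ - ⟪u, v⟫_ℂ := by rw [huv]; ring
      calc a * b = ‖(starRingEnd ℂ α) * β‖ := habs.symm
        _ = ‖⟪ψ₂, ψ₃⟫_ℂ - ⟪u, v⟫_ℂ‖ := by rw [this]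
        _ ≤ c + ‖⟪u, v⟫_ℂ‖ := by
            exact norm_sub_le ⟪ψ₂, ψ₃⟫_ℂ ⟪u, v⟫_ℂ
    linarith
  -- conclude via arccos
  have hcos : Real.cos (Real.arccos a + Real.arccos b)
      = a * b - Real.sqrt (1 - a^2) * Real.sqrt (1 - b^2) := by
    rw [Real.cos_add, Real.cos_arccos (by linarith) ha1, Real.cos_arccos (by linarith) hb1,
      Real.sin_arccos, Real.sin_arccos]
  calc Real.arccos c ≤ Real.arccos (Real.cos (Real.arccos a + Real.arccos b)) := by
        apply arccos_antitone'
        rw [hcos]; exact key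
    _ = Real.arccos a + Real.arccos b := by
        apply Real.arccos_cos
        · have := Real.arccos_nonneg a; have := Real.arccos_nonneg b; linarith
        · have h1 : Real.arccos a ≤ π/2 := Real.arccos_le_pi_div_two.mpr ha0
          have h2 : Real.arccos b ≤ π/2 := Real.arccos_le_pi_div_two.mpr hb0
          linarith
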